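/- Let S = {S₁,…,S_m} be a self-similar zipper in ℝⁿ with vertices z₀ = 0, z₁,…,z_m and signature ε, where each Sᵢ has the form Sᵢ(z) = z_{i−1+εᵢ} + (−1)^{εᵢ} Aᵢ(z) with Aᵢ : ℝⁿ → ℝⁿ linear with ‖Aᵢ‖ < 1. Let T = {T₁,…,T_m} be the affine line zipper with vertices 0 = t₀ < ⋯ < t_m = 1 and signature ε given by Tᵢ(s) = t_{i−1+εᵢ} + (−1)^{εᵢ} qᵢ s, where qᵢ = tᵢ − t_{i−1}. Let f : [0,1] → ℝⁿ be continuous with f(Tᵢ(s)) = Sᵢ(f(s)) for all i, s, and set g(t) = ∫₀ᵗ f(τ)dτ. Then for every i and every s ∈ [0,1]: g(Tᵢ(s)) = g(t_{i−1+εᵢ}) + (−1)^{εᵢ} qᵢ s · z_{i−1+εᵢ} + qᵢ · Aᵢ(g(s)). -/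

import Mathlib

open intervalIntegral in
lemma aff_subst {E : Type*} [NormedAddCommGroup E] [NormedSpace ℝ E]
    (f : ℝ → E) (hf : ContinuousOn f (Set.Icc 0 1)) (c a s : ℝ) (hs : 0 ≤ s)
    (hmem : ∀ u ∈ Set.Icc (0:ℝ) s, c + a * u ∈ Set.Icc (0:ℝ) 1) :
    ∫ x in c..(c + a * s), f x = a • ∫ u in (0:ℝ)..s, f (c + a * u) := by
  have h := intervalIntegral.integral_comp_smul_deriv' (a := (0:ℝ)) (b := s)
      (f := fun u => c + a * u) (f' := fun _ => a) (g := f)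
      (fun x _ => by simpa using ((hasDerivAt_id x).const_mul a).const_add c)
      continuousOn_const
      (hf.mono ?_)
  · simp only [mul_zero, add_zero, Function.comp] at h
    rw [← h, intervalIntegral.integral_smul]
  · rintro x ⟨u, hu, rfl⟩
    rw [Set.uIcc_of_le hs] at hu
    exact hmem u hu


/-- **Key computation in Proposition 2.**
Setting: self-similar zipper `Sᵢ z = z_{i-1+εᵢ} + (-1)^{εᵢ} Aᵢ z` in `ℝⁿ` with `z₀ = 0`
and `‖Aᵢ‖ < 1`, affine line zipper `Tᵢ s = t_{i-1+εᵢ} + (-1)^{εᵢ} qᵢ s` with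
`0 = t₀ < ⋯ < t_m = 1`, `qᵢ = tᵢ - t_{i-1}`, linear parametrization `f` (continuous,
`f ∘ Tᵢ = Sᵢ ∘ f` on `[0,1]`), `g t = ∫₀ᵗ f`.  Then for every `i` and `s ∈ [0,1]`:
`g (Tᵢ s) = g t_{i-1+εᵢ} + ((-1)^{εᵢ} qᵢ s) • z_{i-1+εᵢ} + qᵢ • Aᵢ (g s)`.
(Maps are indexed by `i = 0,…,m-1`, corresponding to the paper's `i+1`.) -/
theorem stmt7 (n m : ℕ) (hm : 1 ≤ m)
    (z : ℕ → EuclideanSpace ℝ (Fin n)) (hz0 : z 0 = 0)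
    (ε : ℕ → ℕ) (hε : ∀ i, ε i ≤ 1)
    (A : ℕ → EuclideanSpace ℝ (Fin n) →L[ℝ] EuclideanSpace ℝ (Fin n))
    (hA : ∀ i < m, ‖A i‖ < 1)
    (S : ℕ → EuclideanSpace ℝ (Fin n) → EuclideanSpace ℝ (Fin n))
    (hS : ∀ i < m, ∀ x, S i x = z (i + ε i) + ((-1 : ℝ) ^ (ε i)) • A i x)
    (hSm : ∀ i < m, S i (z m) = z (i + 1 - ε i))
    (t : ℕ → ℝ) (ht0 : t 0 = 0) (htm : t m = 1)
    (htmono : ∀ i < m, t i < t (i + 1))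
    (q : ℕ → ℝ) (hq : ∀ i < m, q i = t (i + 1) - t i)
    (T : ℕ → ℝ → ℝ)
    (hT : ∀ i < m, ∀ s, T i s = t (i + ε i) + (-1 : ℝ) ^ (ε i) * q i * s)
    (f : ℝ → EuclideanSpace ℝ (Fin n)) (hf : ContinuousOn f (Set.Icc 0 1))
    (hconj : ∀ i < m, ∀ s ∈ Set.Icc (0:ℝ) 1, f (T i s) = S i (f s))
    (g : ℝ → EuclideanSpace ℝ (Fin n))
    (hg : ∀ x, g x = ∫ τ in (0:ℝ)..x, f τ) :
    ∀ i < m, ∀ s ∈ Set.Icc (0:ℝ) 1,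
      g (T i s) = g (t (i + ε i)) + ((-1 : ℝ) ^ (ε i) * q i * s) • z (i + ε i)
        + q i • A i (g s) := by
  -- monotonicity of t on [0, m]
  have tmono : ∀ j k, j ≤ k → k ≤ m → t j ≤ t k := by
    intro j k hjk hkm
    induction k, hjk using Nat.le_induction with
    | base => exact le_rfl
    | succ k hk ih =>
        exact le_trans (ih (le_trans (Nat.le_succ k) hkm))
          (le_of_lt (htmono k (Nat.lt_of_succ_le hkm)))
  have tb : ∀ j, j ≤ m → t j ∈ Set.Icc (0:ℝ) 1 := by
    intro j hj
    constructor
    · rw [← ht0]; exact tmono 0 j (Nat.zero_le j) hj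
    · rw [← htm]; exact tmono j m hj le_rfl
  intro i hi s hs
  obtain ⟨hs0, hs1⟩ := hs
  have hqpos : 0 < q i := by rw [hq i hi]; linarith [htmono i hi]
  have hti : (0:ℝ) ≤ t i := (tb i (le_of_lt hi)).1
  have hti1 : t (i + 1) ≤ 1 := (tb (i + 1) hi).2
  have hqd : q i = t (i + 1) - t i := hq i hi
  set e := ε i with he
  set c := t (i + e) with hc
  set a := (-1 : ℝ) ^ e * q i with ha
  have hie : i + e ≤ m := by
    have := hε i
    omega
  have hcb : c ∈ Set.Icc (0:ℝ) 1 := tb (i + e) hie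
  -- the affine map stays inside [0,1]
  have hmem : ∀ u ∈ Set.Icc (0:ℝ) s, c + a * u ∈ Set.Icc (0:ℝ) 1 := by
    intro u ⟨hu0, hus⟩
    have hu1 : u ≤ 1 := le_trans hus hs1
    have he1 : e ≤ 1 := hε i
    interval_cases e <;> simp only [pow_zero, pow_one, one_mul, neg_one_mul, Nat.add_zero, ha, hc] <;> simp -failIfUnchanged only [Nat.add_zero] at hcb ⊢ <;>
      constructor <;> nlinarith
  have hTeq : T i s = c + a * s := by rw [hT i hi s]
  -- interval integrability
  have hint1 : IntervalIntegrable f MeasureTheory.volume 0 c := by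
    apply (hf.mono _).intervalIntegrable
    rw [Set.uIcc_of_le hcb.1]
    exact Set.Icc_subset_Icc le_rfl hcb.2
  have hcas : c + a * s ∈ Set.Icc (0:ℝ) 1 := hmem s ⟨hs0, le_rfl⟩
  have hint2 : IntervalIntegrable f MeasureTheory.volume c (c + a * s) := by
    apply (hf.mono _).intervalIntegrable
    rw [show Set.Icc (0:ℝ) 1 = Set.uIcc 0 1 from (Set.uIcc_of_le zero_le_one).symm]
    exact Set.uIcc_subset_uIcc (by rw [Set.uIcc_of_le zero_le_one]; exact hcb)
      (by rw [Set.uIcc_of_le zero_le_one]; exact hcas)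
  have hsplit : g (c + a * s) = g c + ∫ x in c..(c + a * s), f x := by
    rw [hg, hg]
    rw [← intervalIntegral.integral_add_adjacent_intervals hint1 hint2]
  -- substitute and use the conjugacy
  have hsub := aff_subst f hf c a s hs0 hmem
  have hcong : ∀ u ∈ Set.uIcc (0:ℝ) s, f (c + a * u) =
      z (i + e) + ((-1 : ℝ) ^ e) • A i (f u) := by
    intro u hu
    rw [Set.uIcc_of_le hs0] at hu
    have hu01 : u ∈ Set.Icc (0:ℝ) 1 := ⟨hu.1, le_trans hu.2 hs1⟩
    have : c + a * u = T i u := by rw [hT i hi u]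
    rw [this, hconj i hi u hu01, hS i hi]
  have hfint : IntervalIntegrable f MeasureTheory.volume 0 s := by
    apply (hf.mono _).intervalIntegrable
    rw [Set.uIcc_of_le hs0]
    exact Set.Icc_subset_Icc le_rfl hs1
  have hAfint : IntervalIntegrable (fun u => ((-1:ℝ) ^ e) • A i (f u))
      MeasureTheory.volume 0 s := by
    apply (((A i).continuous.comp_continuousOn (hf.mono _)).const_smul
      ((-1:ℝ)^e)).intervalIntegrable
    rw [Set.uIcc_of_le hs0]
    exact Set.Icc_subset_Icc le_rfl hs1
  have hI : (∫ u in (0:ℝ)..s, f (c + a * u)) =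
      s • z (i + e) + ((-1:ℝ) ^ e) • A i (g s) := by
    rw [intervalIntegral.integral_congr hcong,
      intervalIntegral.integral_add (intervalIntegrable_const) hAfint,
      intervalIntegral.integral_const, intervalIntegral.integral_smul,
      (A i).intervalIntegral_comp_comm hfint, hg s, sub_zero]
  have hne : ((-1:ℝ) ^ e) * ((-1:ℝ) ^ e) = 1 := by
    rw [← pow_add]; exact Even.neg_one_pow ⟨e, rfl⟩
  have haq : a * (-1:ℝ) ^ e = q i := by rw [ha]; nlinarith [hne]
  rw [hTeq, hsplit, hsub, hI, smul_add, smul_smul, smul_smul, haq]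
  abel
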